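/- Define Ψ(z) = 0_{q⁻¹}(z) · 1_{q q1}(z)⁻¹ and, for k ∈ ℤ, define φ_k(z) = 0_{q⁻¹ q1⁻ᵏ}(z) · 1_{q q1^{1−k}}(z)⁻¹ if k is even, and φ_k(z) = 0_{q q1^{1−k}}(z)⁻¹ · 1_{q⁻¹ q1⁻ᵏ}(z) if k is odd. Then for every integer k ≥ 0, Ψ(z) · ∏_{i=0}^{k−1} A_{i mod 2, q1⁻ⁱ}(z)⁻¹ = φ_k(z), and for every integer k < 0, Ψ(z) · ∏_{i=k}^{−1} A_{i mod 2, q1⁻ⁱ}(z) = φ_k(z), as identities of pairs of rational functions of z (componentwise, wherever denominators are nonzero). -/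

import Mathlib

noncomputable section

/-- The pair of rational functions `A_{0,a}(z)`. -/
def rootA0 (q1 q2 q3 a : ℂ) : RatFunc ℂ × RatFunc ℂ :=
  ((RatFunc.C q2 * RatFunc.X - RatFunc.C a) / (RatFunc.X - RatFunc.C (q2 * a)),
   ((RatFunc.C q1 * RatFunc.X - RatFunc.C a) * (RatFunc.C q3 * RatFunc.X - RatFunc.C a)) /
     ((RatFunc.X - RatFunc.C (q1 * a)) * (RatFunc.X - RatFunc.C (q3 * a))))

/-- The pair of rational functions `A_{1,a}(z)`. -/
def rootA1 (q1 q2 q3 a : ℂ) : RatFunc ℂ × RatFunc ℂ :=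
  (((RatFunc.C q1 * RatFunc.X - RatFunc.C a) * (RatFunc.C q3 * RatFunc.X - RatFunc.C a)) /
     ((RatFunc.X - RatFunc.C (q1 * a)) * (RatFunc.X - RatFunc.C (q3 * a))),
   (RatFunc.C q2 * RatFunc.X - RatFunc.C a) / (RatFunc.X - RatFunc.C (q2 * a)))

/-- `A_{i mod 2, a}(z)` for `i : ℤ`. -/
def rootA (q1 q2 q3 : ℂ) (i : ℤ) (a : ℂ) : RatFunc ℂ × RatFunc ℂ :=
  if Even i then rootA0 q1 q2 q3 a else rootA1 q1 q2 q3 a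

/-- The pair of rational functions `0_a(z) = ((qz - a)/(z - aq), 1)`. -/
def fwt0 (q a : ℂ) : RatFunc ℂ × RatFunc ℂ :=
  ((RatFunc.C q * RatFunc.X - RatFunc.C a) / (RatFunc.X - RatFunc.C (a * q)), 1)

/-- The pair of rational functions `1_a(z) = (1, (qz - a)/(z - aq))`. -/
def fwt1 (q a : ℂ) : RatFunc ℂ × RatFunc ℂ :=
  (1, (RatFunc.C q * RatFunc.X - RatFunc.C a) / (RatFunc.X - RatFunc.C (a * q)))

/-- `Ψ(z) = 0_{q⁻¹}(z) · 1_{q q₁}(z)⁻¹`, the highest ℓ-weight of the vector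
representation. -/
def vecPsi (q q1 : ℂ) : RatFunc ℂ × RatFunc ℂ :=
  fwt0 q q⁻¹ * (fwt1 q (q * q1))⁻¹

/-- The ℓ-weight `φ_k(z)` of the state `k` of the vector representation. -/
def vecWt (q q1 : ℂ) (k : ℤ) : RatFunc ℂ × RatFunc ℂ :=
  if Even k then fwt0 q (q⁻¹ * q1 ^ (-k)) * (fwt1 q (q * q1 ^ (1 - k)))⁻¹
  else (fwt0 q (q * q1 ^ (1 - k)))⁻¹ * fwt1 q (q⁻¹ * q1 ^ (-k))

lemma aux_X_sub_C_ne (e : ℂ) : RatFunc.X - RatFunc.C e ≠ 0 := by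
  intro h
  have := sub_eq_zero.mp h
  rw [RatFunc.X, ← RatFunc.algebraMap_C,
    (IsFractionRing.injective (Polynomial ℂ) (RatFunc ℂ)).eq_iff] at this
  exact Polynomial.X_ne_C e this

lemma aux_C_ne {c : ℂ} (hc : c ≠ 0) : RatFunc.C c ≠ 0 := fun h => hc (by simpa using h)

lemma aux_CX_sub_C_ne {c : ℂ} (hc : c ≠ 0) (e : ℂ) :
    RatFunc.C c * RatFunc.X - RatFunc.C e ≠ 0 := by
  intro h
  apply aux_X_sub_C_ne (c⁻¹ * e)
  have := sub_eq_zero.mp h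
  rw [sub_eq_zero, map_mul, ← this, ← mul_assoc, ← map_mul, inv_mul_cancel₀ hc, map_one,
    one_mul]

lemma step_down (q q1 : ℂ) (hq : q ≠ 0) (h1 : q1 ≠ 0) (k : ℤ) :
    vecWt q q1 (k + 1) * rootA q1 (q ^ 2) ((q ^ 2 * q1)⁻¹) k (q1 ^ (-k)) = vecWt q q1 k := by
  have h2 : (q : ℂ) ^ 2 ≠ 0 := pow_ne_zero _ hq
  have h3 : ((q : ℂ) ^ 2 * q1)⁻¹ ≠ 0 := inv_ne_zero (mul_ne_zero h2 h1)
  have e1 : q1 ^ (1 - (k + 1)) = q1 ^ (-k) := by rw [show (1 : ℤ) - (k + 1) = -k by ring]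
  have e2 : q1 ^ (-(k + 1)) = q1 ^ (-k) * q1⁻¹ := by
    rw [show -(k + 1) = -k + -1 by ring, zpow_add₀ h1, zpow_neg_one]
  have e3 : q1 ^ (1 - k) = q1 * q1 ^ (-k) := by
    rw [show (1 : ℤ) - k = 1 + -k by ring, zpow_add₀ h1, zpow_one]
  obtain ⟨a, ha, hA⟩ : ∃ a : ℂ, a ≠ 0 ∧ q1 ^ (-k) = a := ⟨_, zpow_ne_zero _ h1, rfl⟩
  rcases Int.even_or_odd k with he | ho
  · have hek : ¬Even (k + 1) := by simpa [Int.even_add_one] using he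
    rw [vecWt, vecWt, rootA, if_neg hek, if_pos he, if_pos he, e1, e2, e3, hA]
    simp only [rootA0, fwt0, fwt1, Prod.ext_iff, Prod.mk_mul_mk, Prod.inv_mk, Prod.fst,
      Prod.snd]
    constructor <;>
    · simp only [one_mul, mul_one, inv_one, inv_div, div_mul_div_comm]
      rw [div_eq_div_iff
        (by apply_rules [mul_ne_zero, aux_X_sub_C_ne, aux_CX_sub_C_ne hq,
          aux_CX_sub_C_ne h2, aux_CX_sub_C_ne h1, aux_CX_sub_C_ne h3])
        (by apply_rules [mul_ne_zero, aux_X_sub_C_ne, aux_CX_sub_C_ne hq,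
          aux_CX_sub_C_ne h2, aux_CX_sub_C_ne h1, aux_CX_sub_C_ne h3])]
      simp only [map_mul, map_inv₀, map_pow]
      field_simp [aux_C_ne hq, aux_C_ne h1, aux_C_ne ha]
  · have he : ¬Even k := Int.not_even_iff_odd.mpr ho
    have hek : Even (k + 1) := by simpa [Int.even_add_one] using he
    rw [vecWt, vecWt, rootA, if_neg he, if_pos hek, if_neg he, e1, e2, e3, hA]
    simp only [rootA1, fwt0, fwt1, Prod.ext_iff, Prod.mk_mul_mk, Prod.inv_mk, Prod.fst,
      Prod.snd]
    constructor <;>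
    · simp only [one_mul, mul_one, inv_one, inv_div, div_mul_div_comm]
      rw [div_eq_div_iff
        (by apply_rules [mul_ne_zero, aux_X_sub_C_ne, aux_CX_sub_C_ne hq,
          aux_CX_sub_C_ne h2, aux_CX_sub_C_ne h1, aux_CX_sub_C_ne h3])
        (by apply_rules [mul_ne_zero, aux_X_sub_C_ne, aux_CX_sub_C_ne hq,
          aux_CX_sub_C_ne h2, aux_CX_sub_C_ne h1, aux_CX_sub_C_ne h3])]
      simp only [map_mul, map_inv₀, map_pow]
      field_simp [aux_C_ne hq, aux_C_ne h1, aux_C_ne ha]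

lemma step_up (q q1 : ℂ) (hq : q ≠ 0) (h1 : q1 ≠ 0) (k : ℤ) :
    vecWt q q1 k * (rootA q1 (q ^ 2) ((q ^ 2 * q1)⁻¹) k (q1 ^ (-k)))⁻¹ = vecWt q q1 (k + 1) := by
  have h2 : (q : ℂ) ^ 2 ≠ 0 := pow_ne_zero _ hq
  have h3 : ((q : ℂ) ^ 2 * q1)⁻¹ ≠ 0 := inv_ne_zero (mul_ne_zero h2 h1)
  have e1 : q1 ^ (1 - (k + 1)) = q1 ^ (-k) := by rw [show (1 : ℤ) - (k + 1) = -k by ring]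
  have e2 : q1 ^ (-(k + 1)) = q1 ^ (-k) * q1⁻¹ := by
    rw [show -(k + 1) = -k + -1 by ring, zpow_add₀ h1, zpow_neg_one]
  have e3 : q1 ^ (1 - k) = q1 * q1 ^ (-k) := by
    rw [show (1 : ℤ) - k = 1 + -k by ring, zpow_add₀ h1, zpow_one]
  obtain ⟨a, ha, hA⟩ : ∃ a : ℂ, a ≠ 0 ∧ q1 ^ (-k) = a := ⟨_, zpow_ne_zero _ h1, rfl⟩
  rcases Int.even_or_odd k with he | ho
  · have hek : ¬Even (k + 1) := by simpa [Int.even_add_one] using he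
    rw [vecWt, vecWt, rootA, if_neg hek, if_pos he, if_pos he, e1, e2, e3, hA]
    simp only [rootA0, fwt0, fwt1, Prod.ext_iff, Prod.mk_mul_mk, Prod.inv_mk, Prod.fst,
      Prod.snd]
    constructor <;>
    · simp only [one_mul, mul_one, inv_one, inv_div, div_mul_div_comm]
      rw [div_eq_div_iff
        (by apply_rules [mul_ne_zero, aux_X_sub_C_ne, aux_CX_sub_C_ne hq,
          aux_CX_sub_C_ne h2, aux_CX_sub_C_ne h1, aux_CX_sub_C_ne h3])
        (by apply_rules [mul_ne_zero, aux_X_sub_C_ne, aux_CX_sub_C_ne hq,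
          aux_CX_sub_C_ne h2, aux_CX_sub_C_ne h1, aux_CX_sub_C_ne h3])]
      simp only [map_mul, map_inv₀, map_pow]
      field_simp [aux_C_ne hq, aux_C_ne h1, aux_C_ne ha]
  · have he : ¬Even k := Int.not_even_iff_odd.mpr ho
    have hek : Even (k + 1) := by simpa [Int.even_add_one] using he
    rw [vecWt, vecWt, rootA, if_neg he, if_pos hek, if_neg he, e1, e2, e3, hA]
    simp only [rootA1, fwt0, fwt1, Prod.ext_iff, Prod.mk_mul_mk, Prod.inv_mk, Prod.fst,
      Prod.snd]
    constructor <;>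
    · simp only [one_mul, mul_one, inv_one, inv_div, div_mul_div_comm]
      rw [div_eq_div_iff
        (by apply_rules [mul_ne_zero, aux_X_sub_C_ne, aux_CX_sub_C_ne hq,
          aux_CX_sub_C_ne h2, aux_CX_sub_C_ne h1, aux_CX_sub_C_ne h3])
        (by apply_rules [mul_ne_zero, aux_X_sub_C_ne, aux_CX_sub_C_ne hq,
          aux_CX_sub_C_ne h2, aux_CX_sub_C_ne h1, aux_CX_sub_C_ne h3])]
      simp only [map_mul, map_inv₀, map_pow]
      field_simp [aux_C_ne hq, aux_C_ne h1, aux_C_ne ha]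

lemma vecPsi_eq (q q1 : ℂ) : vecPsi q q1 = vecWt q q1 0 := by
  simp [vecPsi, vecWt]

/-- The telescoping identity computing the ℓ-weights of the states of the
vector representation of the quantum toroidal `gl₂` algebra. -/
theorem vector_rep_weights
    (q d : ℂ) (hq : q ≠ 0) (hd : d ≠ 0)
    (q1 q2 q3 : ℂ) (hq1 : q1 = q⁻¹ * d) (hq2 : q2 = q ^ 2) (hq3 : q3 = q⁻¹ * d⁻¹)
    (k : ℤ) :
    (0 ≤ k →
      vecPsi q q1 * ∏ i ∈ Finset.Ico (0 : ℤ) k, (rootA q1 q2 q3 i (q1 ^ (-i)))⁻¹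
        = vecWt q q1 k) ∧
    (k < 0 →
      vecPsi q q1 * ∏ i ∈ Finset.Icc k (-1 : ℤ), rootA q1 q2 q3 i (q1 ^ (-i))
        = vecWt q q1 k) := by
  have h1 : q1 ≠ 0 := by rw [hq1]; exact mul_ne_zero (inv_ne_zero hq) hd
  have hq2' : q2 = q ^ 2 := hq2
  have hq3' : q3 = (q ^ 2 * q1)⁻¹ := by
    rw [hq3, hq1]
    field_simp
  subst hq2' hq3'
  constructor
  · refine Int.le_induction (m := 0)
      (motive := fun j _ => vecPsi q q1 *
        ∏ i ∈ Finset.Ico (0 : ℤ) j, (rootA q1 (q ^ 2) ((q ^ 2 * q1)⁻¹) i (q1 ^ (-i)))⁻¹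
          = vecWt q q1 j) ?_ ?_ k
    · beta_reduce
      simpa using vecPsi_eq q q1
    · intro n hn ih
      beta_reduce at ih ⊢
      have hIco : Finset.Ico (0 : ℤ) (n + 1) = insert n (Finset.Ico (0 : ℤ) n) := by
        ext x
        simp only [Finset.mem_Ico, Finset.mem_insert]
        omega
      rw [hIco, Finset.prod_insert (by simp), mul_comm ((rootA _ _ _ n _)⁻¹),
        ← mul_assoc, ih]
      exact step_up q q1 hq h1 n
  · intro hk
    refine Int.le_induction_down (m := -1)
      (motive := fun j _ => vecPsi q q1 *
        ∏ i ∈ Finset.Icc j (-1 : ℤ), rootA q1 (q ^ 2) ((q ^ 2 * q1)⁻¹) i (q1 ^ (-i))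
          = vecWt q q1 j) ?_ ?_ k (by omega)
    · beta_reduce
      rw [show Finset.Icc (-1 : ℤ) (-1 : ℤ) = {(-1 : ℤ)} from Finset.Icc_self _,
        Finset.prod_singleton, vecPsi_eq]
      have := step_down q q1 hq h1 (-1)
      norm_num at this ⊢
      exact this
    · intro n hn ih
      beta_reduce at ih ⊢
      have hIcc : Finset.Icc (n - 1) (-1 : ℤ) = insert (n - 1) (Finset.Icc n (-1 : ℤ)) := by
        ext x
        simp only [Finset.mem_Icc, Finset.mem_insert]
        omega
      rw [hIcc, Finset.prod_insert (by simp), mul_comm (rootA _ _ _ (n - 1) _),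
        ← mul_assoc, ih]
      have := step_down q q1 hq h1 (n - 1)
      rw [sub_add_cancel] at this
      exact this

end
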